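/- Assume X is an n×p matrix with orthonormal columns and the true mean is μ = 0. For k ∈ {1,…,p}, the value λ*_k solving E(k_L(λ)) = k in the expected-size formula E(k_L(λ)) = Σᵢ [1 − Φ(√(2λ)/σ) + Φ(−√(2λ)/σ)] satisfies −√(2λ*_k)/σ = Φ⁻¹(k/(2p)), and the resulting heuristic degrees of freedom equals hdf(k) = k − 2p·Φ⁻¹(k/(2p))·φ(Φ⁻¹(k/(2p))). -/

import Mathlib

open Real MeasureTheory Filter Set

noncomputable def stdPdf (v : ℝ) : ℝ := (Real.sqrt (2 * Real.pi))⁻¹ * Real.exp (-(v ^ 2) / 2)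
noncomputable def stdCdf (v : ℝ) : ℝ := ∫ t in Set.Iic v, stdPdf t
noncomputable def stdQuantile : ℝ → ℝ := Function.invFun stdCdf

/-- Expected subset size of Lagrangian best subset selection under `μ = 0`
and orthonormal predictors. -/
noncomputable def EkL (p : ℕ) (σ lam : ℝ) : ℝ :=
  (p : ℝ) * (1 - stdCdf (Real.sqrt (2 * lam) / σ) + stdCdf (-Real.sqrt (2 * lam) / σ))

/-- Effective degrees of freedom of Lagrangian best subset selection under `μ = 0`. -/
noncomputable def dfL (p : ℕ) (σ lam : ℝ) : ℝ :=
  EkL p σ lam +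
    (Real.sqrt (2 * lam) / σ) *
      ((p : ℝ) * (stdPdf (Real.sqrt (2 * lam) / σ) + stdPdf (-Real.sqrt (2 * lam) / σ)))

lemma stdPdf_eq (v : ℝ) : stdPdf v = (Real.sqrt (2 * Real.pi))⁻¹ * Real.exp (-(2⁻¹) * v ^ 2) := by
  unfold stdPdf; ring_nf

lemma stdPdf_pos (v : ℝ) : 0 < stdPdf v := by
  have : (0:ℝ) < Real.sqrt (2 * Real.pi) := Real.sqrt_pos.2 (by positivity)
  exact mul_pos (inv_pos.2 this) (Real.exp_pos _)

lemma stdPdf_neg (v : ℝ) : stdPdf (-v) = stdPdf v := by simp [stdPdf]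

lemma integrable_stdPdf : Integrable stdPdf := by
  simp only [funext stdPdf_eq]
  exact (integrable_exp_neg_mul_sq (by norm_num)).const_mul _

lemma integral_stdPdf : ∫ v, stdPdf v = 1 := by
  simp only [funext stdPdf_eq]
  rw [integral_const_mul, integral_gaussian]
  rw [← Real.sqrt_inv, ← Real.sqrt_mul (by positivity)]
  rw [show (2 * Real.pi)⁻¹ * (Real.pi / 2⁻¹) = 1 by field_simp]
  exact Real.sqrt_one

lemma stdCdf_strictMono : StrictMono stdCdf := by
  intro a b hab
  have h : stdCdf b - stdCdf a = ∫ x in a..b, stdPdf x :=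
    intervalIntegral.integral_Iic_sub_Iic integrable_stdPdf.integrableOn
      integrable_stdPdf.integrableOn
  have hpos : 0 < ∫ x in a..b, stdPdf x :=
    intervalIntegral.intervalIntegral_pos_of_pos (f := stdPdf)
      integrable_stdPdf.intervalIntegrable (fun x => stdPdf_pos x) hab
  linarith

lemma stdCdf_neg (x : ℝ) : stdCdf (-x) = 1 - stdCdf x := by
  have h1 : stdCdf (-x) = ∫ t in Set.Ioi x, stdPdf t := by
    rw [stdCdf, show (∫ t in Set.Iic (-x), stdPdf t) = ∫ t in Set.Iic (-x), stdPdf (-t) by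
      simp [stdPdf_neg], integral_comp_neg_Iic, neg_neg]
  have h2 : stdCdf x + (∫ t in Set.Ioi x, stdPdf t) = 1 := by
    rw [stdCdf, intervalIntegral.integral_Iic_add_Ioi integrable_stdPdf.integrableOn
      integrable_stdPdf.integrableOn, integral_stdPdf]
  linarith [h1, h2]

theorem hdf_null_formula (p : ℕ) (hp : 0 < p) (σ : ℝ) (hσ : 0 < σ)
    (k : ℕ) (hk1 : 1 ≤ k) (hkp : k ≤ p)
    (lam : ℝ) (hlam : 0 ≤ lam) (hsolve : EkL p σ lam = k) :
    -Real.sqrt (2 * lam) / σ = stdQuantile ((k : ℝ) / (2 * p)) ∧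
    dfL p σ lam =
      (k : ℝ) - 2 * (p : ℝ) * stdQuantile ((k : ℝ) / (2 * p)) *
        stdPdf (stdQuantile ((k : ℝ) / (2 * p))) := by
  set x := Real.sqrt (2 * lam) / σ with hx
  have hnx : -Real.sqrt (2 * lam) / σ = -x := by rw [hx, neg_div]
  have hp' : (0:ℝ) < p := Nat.cast_pos.2 hp
  have hΦ : stdCdf (-x) = (k : ℝ) / (2 * p) := by
    have hs : (p : ℝ) * (1 - stdCdf x + stdCdf (-x)) = k := by
      rw [EkL] at hsolve; rw [← hnx]; exact hsolve
    rw [stdCdf_neg] at hs ⊢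
    field_simp
    linarith
  have hq : stdQuantile ((k : ℝ) / (2 * p)) = -x := by
    rw [← hΦ, stdQuantile, Function.leftInverse_invFun stdCdf_strictMono.injective]
  constructor
  · rw [hnx, hq]
  · rw [hq, dfL, ← hsolve, EkL, ← hx, hnx, stdPdf_neg]
    ring
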